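/- Let p ≥ 5 be a prime and b ≥ 2 an integer. Then there exist non-zero elements λ₁,…,λ_b, μ₁,…,μ_b ∈ ℤ/p such that λ₁ + ⋯ + λ_b = 1, μ₁ + ⋯ + μ_b = 1, and λⱼμⱼ ≠ 1 for all j ∈ {1,…,b}. -/
import Mathlib

theorem stmt_10 (p b : ℕ) (hp : p.Prime) (hp5 : 5 ≤ p) (hb : 2 ≤ b) :
    ∃ lam mu : Fin b → ZMod p,
      (∀ j, lam j ≠ 0) ∧ (∀ j, mu j ≠ 0) ∧
      (∑ j, lam j) = 1 ∧ (∑ j, mu j) = 1 ∧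
      ∀ j, lam j * mu j ≠ 1 := by
  obtain ⟨m, rfl⟩ : ∃ m, b = m + 2 := ⟨b - 2, by omega⟩
  haveI : Fact p.Prime := ⟨hp⟩
  have hcard : Fintype.card (ZMod p) = p := ZMod.card p
  set s : ZMod p := 1 - (m : ZMod p) with hs
  set t : ZMod p := 1 - 2 * (m : ZMod p) with ht
  -- pick x ∉ {0, s}
  obtain ⟨x, hx⟩ : ∃ x : ZMod p, x ∉ ({0, s} : Finset (ZMod p)) := by
    by_contra h
    push_neg at h
    have h1 : (Finset.univ : Finset (ZMod p)) ⊆ {0, s} := fun z _ => h z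
    have h2 := Finset.card_le_card h1
    have h3 : ({0, s} : Finset (ZMod p)).card ≤ 2 :=
      (Finset.card_insert_le _ _).trans (by simp)
    rw [Finset.card_univ, hcard] at h2
    omega
  simp only [Finset.mem_insert, Finset.mem_singleton, not_or] at hx
  obtain ⟨hx0, hxs⟩ := hx
  have hsx : s - x ≠ 0 := fun h => hxs (by linear_combination -h)
  -- pick u ∉ {0, t, x⁻¹, t - (s - x)⁻¹}
  obtain ⟨u, hu⟩ : ∃ u : ZMod p, u ∉ ({0, t, x⁻¹, t - (s - x)⁻¹} : Finset (ZMod p)) := by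
    by_contra h
    push_neg at h
    have h1 : (Finset.univ : Finset (ZMod p)) ⊆ _ := fun z _ => h z
    have h2 := Finset.card_le_card h1
    have h3 : ({0, t, x⁻¹, t - (s - x)⁻¹} : Finset (ZMod p)).card ≤ 4 :=
      (Finset.card_insert_le _ _).trans (by
        have := Finset.card_insert_le t ({x⁻¹, t - (s - x)⁻¹} : Finset (ZMod p))
        have := Finset.card_insert_le x⁻¹ ({t - (s - x)⁻¹} : Finset (ZMod p))
        simp at *
        omega)
    rw [Finset.card_univ, hcard] at h2
    omega
  simp only [Finset.mem_insert, Finset.mem_singleton, not_or] at hu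
  obtain ⟨hu0, hut, huxi, huw⟩ := hu
  have htu : t - u ≠ 0 := fun h => hut (by linear_combination -h)
  have h2z : (2 : ZMod p) ≠ 0 := by
    intro h
    have : ((2 : ℕ) : ZMod p) = 0 := by exact_mod_cast h
    have hdvd : p ∣ 2 := (ZMod.natCast_eq_zero_iff 2 p).mp this
    have := Nat.le_of_dvd (by norm_num) hdvd
    omega
  have h21 : (2 : ZMod p) ≠ 1 := by
    intro h
    exact one_ne_zero (α := ZMod p) (by linear_combination h)
  refine ⟨fun j => if (j : ℕ) = 0 then x else if (j : ℕ) = 1 then s - x else 1,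
    fun j => if (j : ℕ) = 0 then u else if (j : ℕ) = 1 then t - u else 2, ?_, ?_, ?_, ?_, ?_⟩
  · intro j
    by_cases h0 : (j : ℕ) = 0
    · simpa [h0] using hx0
    by_cases h1 : (j : ℕ) = 1
    · simpa [h0, h1] using hsx
    · simp [h0, h1]
  · intro j
    by_cases h0 : (j : ℕ) = 0
    · simpa [h0] using hu0
    by_cases h1 : (j : ℕ) = 1
    · simpa [h0, h1] using htu
    · simpa [h0, h1] using h2z
  · rw [Fin.sum_univ_succ, Fin.sum_univ_succ]
    simp [Fin.val_succ, Finset.sum_const, nsmul_eq_mul]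
    ring
  · rw [Fin.sum_univ_succ, Fin.sum_univ_succ]
    simp [Fin.val_succ, Finset.sum_const, nsmul_eq_mul]
    ring
  · intro j
    by_cases h0 : (j : ℕ) = 0
    · simp only [h0, if_true]
      intro h
      exact huxi ((inv_eq_of_mul_eq_one_right h).symm)
    by_cases h1 : (j : ℕ) = 1
    · simp only [h0, h1, if_false, if_true]
      intro h
      have hinv : (s - x)⁻¹ = t - u := inv_eq_of_mul_eq_one_right h
      exact huw (by linear_combination hinv)
    · simp only [h0, h1, if_false]
      exact fun h => h21 (by linear_combination h)
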